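/- Let ρ_i > 0, and suppose λ_i^k - λ_i^{k-1} = ρ_i(z^k - x_i^k) for all i in a finite set M with Σ_i λ_i^k = 0 = Σ_i λ_i^{k-1}. If all ρ_i are equal to a common ρ and z^k = (1/|M|)Σ_i x_i^k, then Σ_i ‖z^{k-1} - x_i^k‖² = Σ_i ‖z^k - z^{k-1}‖² + (1/ρ²)Σ_i ‖λ_i^k - λ_i^{k-1}‖². -/

import Mathlib

theorem stmt_16 {ι : Type*} [Fintype ι] [Nonempty ι] (n : ℕ)
    (ρ : ℝ) (hρ : 0 < ρ)
    (x lamk lamk1 : ι → EuclideanSpace ℝ (Fin n)) (zk zk1 : EuclideanSpace ℝ (Fin n))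
    (hupd : ∀ i, lamk i - lamk1 i = ρ • (zk - x i))
    (hsumk : ∑ i, lamk i = 0) (hsumk1 : ∑ i, lamk1 i = 0)
    (hz : zk = (1 / (Fintype.card ι : ℝ)) • (∑ i : ι, x i)) :
    ∑ i, ‖zk1 - x i‖ ^ 2
      = ∑ _i : ι, ‖zk - zk1‖ ^ 2 + (1 / ρ ^ 2) * ∑ i, ‖lamk i - lamk1 i‖ ^ 2 := by
  have hcard : (Fintype.card ι : ℝ) ≠ 0 := by
    exact_mod_cast Fintype.card_ne_zero
  have hsum0 : ∑ i : ι, (zk - x i) = 0 := by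
    rw [Finset.sum_sub_distrib, Finset.sum_const, hz, Finset.card_univ,
      ← Nat.cast_smul_eq_nsmul ℝ, smul_smul]
    rw [mul_one_div, div_self hcard, one_smul, sub_self]
  have hterm : ∀ i, ‖zk1 - x i‖ ^ 2
      = ‖zk - zk1‖ ^ 2 + 2 * inner ℝ (zk1 - zk) (zk - x i) + ‖zk - x i‖ ^ 2 := by
    intro i
    have h1 : zk1 - x i = (zk1 - zk) + (zk - x i) := by abel
    rw [h1, @norm_add_sq_real, norm_sub_rev]
  have hlam : ∀ i, ‖lamk i - lamk1 i‖ ^ 2 = ρ ^ 2 * ‖zk - x i‖ ^ 2 := by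
    intro i
    rw [hupd i, norm_smul, Real.norm_eq_abs, abs_of_pos hρ, mul_pow]
  have hinner : ∑ i : ι, (inner ℝ (zk1 - zk) (zk - x i) : ℝ) = 0 := by
    rw [← inner_sum, hsum0, inner_zero_right]
  have hρ2 : ρ ^ 2 ≠ 0 := pow_ne_zero 2 (ne_of_gt hρ)
  calc ∑ i, ‖zk1 - x i‖ ^ 2
      = ∑ i : ι, (‖zk - zk1‖ ^ 2 + 2 * inner ℝ (zk1 - zk) (zk - x i) + ‖zk - x i‖ ^ 2) := by
        exact Finset.sum_congr rfl fun i _ => hterm i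
    _ = ∑ _i : ι, ‖zk - zk1‖ ^ 2 + 2 * ∑ i : ι, (inner ℝ (zk1 - zk) (zk - x i) : ℝ)
          + ∑ i : ι, ‖zk - x i‖ ^ 2 := by
        rw [Finset.sum_add_distrib, Finset.sum_add_distrib, ← Finset.mul_sum]
    _ = ∑ _i : ι, ‖zk - zk1‖ ^ 2 + ∑ i : ι, ‖zk - x i‖ ^ 2 := by
        rw [hinner]; ring
    _ = ∑ _i : ι, ‖zk - zk1‖ ^ 2 + (1 / ρ ^ 2) * ∑ i, ‖lamk i - lamk1 i‖ ^ 2 := by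
        congr 1
        simp only [hlam, ← Finset.mul_sum]
        field_simp
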